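/- Let n ≥ 2 and let λ₁ ≥ λ₂ ≥ ⋯ ≥ λₙ be real numbers satisfying Θ(λ) ≥ (n−2)·π/2. Then for every k with 1 ≤ k ≤ n−1 the elementary symmetric polynomial satisfies σ_k(λ₁, …, λₙ) ≥ 0. -/

import Mathlib

open Real

open Finset in
private lemma esymm_insert_aux {α : Type*} [DecidableEq α] (l : α → ℝ) {i : α} {A : Finset α}
    (hi : i ∉ A) (k : ℕ) :
    ∑ S ∈ (insert i A).powersetCard (k+1), ∏ j ∈ S, l j
      = (∑ S ∈ A.powersetCard (k+1), ∏ j ∈ S, l j)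
        + l i * ∑ S ∈ A.powersetCard k, ∏ j ∈ S, l j := by
  have hdisj : Disjoint (A.powersetCard (k+1)) ((A.powersetCard k).image (insert i)) := by
    rw [disjoint_left]
    intro S hS hS'
    obtain ⟨T, hT, rfl⟩ := mem_image.mp hS'
    exact hi ((mem_powersetCard.mp hS).1 (mem_insert_self i T))
  have hinj : ∀ S ∈ A.powersetCard k, ∀ T ∈ A.powersetCard k,
      insert i S = insert i T → S = T := by
    intro S hS T hT hST
    have hiS : i ∉ S := fun h => hi ((mem_powersetCard.mp hS).1 h)
    have hiT : i ∉ T := fun h => hi ((mem_powersetCard.mp hT).1 h)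
    rw [← erase_insert hiS, ← erase_insert hiT, hST]
  rw [powersetCard_succ_insert hi, sum_union hdisj, sum_image hinj, mul_sum]
  congr 1
  refine sum_congr rfl fun S hS => ?_
  rw [prod_insert (fun h => hi ((mem_powersetCard.mp hS).1 h))]

open Finset in
private lemma counting_aux {α : Type*} [DecidableEq α] (l : α → ℝ) (B : Finset α)
    (hl : ∀ i ∈ B, 0 ≤ l i) {m : ℕ} (hm : m < B.card) :
    ∑ T ∈ B.powersetCard m, ∏ j ∈ T, l j
      ≤ ∑ i ∈ B, ∑ T ∈ (B.erase i).powersetCard m, ∏ j ∈ T, l j := by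
  have key : ∀ i : α, (B.erase i).powersetCard m
      = (B.powersetCard m).filter (fun T => i ∉ T) := by
    intro i
    ext T
    simp only [mem_powersetCard, mem_filter, subset_erase]
    tauto
  have hnn : ∀ T ∈ B.powersetCard m, 0 ≤ ∏ j ∈ T, l j := by
    intro T hT
    exact prod_nonneg fun j hj => hl j ((mem_powersetCard.mp hT).1 hj)
  calc ∑ T ∈ B.powersetCard m, ∏ j ∈ T, l j
      ≤ ∑ T ∈ B.powersetCard m, ∑ i ∈ B, (if i ∉ T then ∏ j ∈ T, l j else 0) := by
        refine sum_le_sum fun T hT => ?_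
        obtain ⟨hTB, hTc⟩ := mem_powersetCard.mp hT
        have hne : (B \ T).Nonempty := by
          rw [sdiff_nonempty]
          intro hsub
          exact absurd (card_le_card hsub) (by omega)
        obtain ⟨i₀, hi₀⟩ := hne
        obtain ⟨hi₀B, hi₀T⟩ := mem_sdiff.mp hi₀
        have hnn' : ∀ i ∈ B, 0 ≤ (fun i => if i ∉ T then ∏ j ∈ T, l j else 0) i := by
          intro i _
          dsimp only
          split_ifs with h
          all_goals first | exact hnn T hT | exact le_refl 0
        have := Finset.single_le_sum hnn' hi₀B
        simpa [hi₀T] using this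
    _ = ∑ i ∈ B, ∑ T ∈ B.powersetCard m, (if i ∉ T then ∏ j ∈ T, l j else 0) :=
        Finset.sum_comm
    _ = ∑ i ∈ B, ∑ T ∈ (B.erase i).powersetCard m, ∏ j ∈ T, l j := by
        refine sum_congr rfl fun i _ => ?_
        rw [key i, sum_filter]

open Finset in
private lemma comb_aux {α : Type*} [DecidableEq α] (l : α → ℝ) (B : Finset α)
    (hl : ∀ i ∈ B, 0 < l i) {m : ℕ} (hm : m < B.card) :
    ∑ T ∈ B.powersetCard m, ∏ j ∈ T, l j
      ≤ (∑ i ∈ B, (l i)⁻¹) * ∑ S ∈ B.powersetCard (m+1), ∏ j ∈ S, l j := by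
  have hnn : ∀ (A : Finset α) (k : ℕ), A ⊆ B → 0 ≤ ∑ S ∈ A.powersetCard k, ∏ j ∈ S, l j := by
    intro A k hAB
    refine sum_nonneg fun S hS => prod_nonneg fun j hj =>
      (hl j (hAB ((mem_powersetCard.mp hS).1 hj))).le
  rw [sum_mul]
  calc ∑ T ∈ B.powersetCard m, ∏ j ∈ T, l j
      ≤ ∑ i ∈ B, ∑ T ∈ (B.erase i).powersetCard m, ∏ j ∈ T, l j :=
        counting_aux l B (fun i hi => (hl i hi).le) hm
    _ ≤ ∑ i ∈ B, (l i)⁻¹ * ∑ S ∈ B.powersetCard (m+1), ∏ j ∈ S, l j := by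
        refine sum_le_sum fun i hi => ?_
        have hins := esymm_insert_aux l (notMem_erase i B) m
        rw [insert_erase hi] at hins
        have hE' : 0 ≤ ∑ S ∈ (B.erase i).powersetCard (m+1), ∏ j ∈ S, l j :=
          hnn _ _ (erase_subset i B)
        have hli : 0 < l i := hl i hi
        rw [hins, mul_add]
        have h2 : (l i)⁻¹ * (l i * ∑ S ∈ (B.erase i).powersetCard m, ∏ j ∈ S, l j)
            = ∑ S ∈ (B.erase i).powersetCard m, ∏ j ∈ S, l j := by
          field_simp
        rw [h2]
        have h3 : 0 ≤ (l i)⁻¹ * ∑ S ∈ (B.erase i).powersetCard (m+1), ∏ j ∈ S, l j :=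
          mul_nonneg (inv_nonneg.mpr hli.le) hE'
        linarith

private lemma arctan_add_le' {x y : ℝ} (hx : 0 ≤ x) (hy : 0 ≤ y) :
    arctan (x + y) ≤ arctan x + arctan y := by
  rcases lt_or_ge (x * y) 1 with h | h
  · rw [arctan_add h]
    apply arctan_strictMono.monotone
    rw [le_div_iff₀ (by nlinarith)]
    nlinarith [mul_nonneg hx hy, mul_nonneg (mul_nonneg hx hy) (add_nonneg hx hy)]
  · have hx' : 0 < x := by nlinarith
    have h1 : x⁻¹ ≤ y := le_of_mul_le_mul_left (by rw [mul_inv_cancel₀ hx'.ne']; exact h) hx'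
    have h2 : arctan x⁻¹ ≤ arctan y := arctan_strictMono.monotone h1
    have h3 : arctan x⁻¹ = π / 2 - arctan x := Real.arctan_inv_of_pos hx'
    have h4 : arctan (x + y) < π / 2 := Real.arctan_lt_pi_div_two _
    linarith

open Finset in
private lemma arctan_sum_le {α : Type*} (B : Finset α) (f : α → ℝ) (hf : ∀ i ∈ B, 0 ≤ f i) :
    arctan (∑ i ∈ B, f i) ≤ ∑ i ∈ B, arctan (f i) := by
  induction B using Finset.cons_induction with
  | empty => simp
  | cons a s ha ih =>
    rw [sum_cons, sum_cons]
    have h1 : 0 ≤ ∑ i ∈ s, f i := sum_nonneg fun i hi => hf i (mem_cons_of_mem hi)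
    calc arctan (f a + ∑ i ∈ s, f i) ≤ arctan (f a) + arctan (∑ i ∈ s, f i) :=
          arctan_add_le' (hf a (mem_cons_self a s)) h1
      _ ≤ arctan (f a) + ∑ i ∈ s, arctan (f i) :=
          add_le_add le_rfl (ih fun i hi => hf i (mem_cons_of_mem hi))

/-- Lemma 2.1(iii): if `λ₁ ≥ ⋯ ≥ λₙ` and `Θ(λ) ≥ (n-2)π/2`, then
`σ_k(λ) ≥ 0` for all `1 ≤ k ≤ n-1`, where `σ_k` is the `k`-th elementary
symmetric polynomial. -/
theorem stmt_2 (n : ℕ) (hn : 2 ≤ n) (l : Fin n → ℝ)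
    (hdec : ∀ i j : Fin n, i ≤ j → l j ≤ l i)
    (hΘ : ((n : ℝ) - 2) * (π / 2) ≤ ∑ i, Real.arctan (l i)) :
    ∀ k : ℕ, 1 ≤ k → k ≤ n - 1 →
      0 ≤ ∑ S ∈ Finset.powersetCard k (Finset.univ : Finset (Fin n)), ∏ i ∈ S, l i := by
  classical
  intro k hk1 hk2
  open Finset in
  have hn0 : 0 < n := by omega
  set i₀ : Fin n := ⟨n - 1, by omega⟩ with hi₀def
  have hmin : ∀ i : Fin n, l i₀ ≤ l i := by
    intro i
    exact hdec i i₀ (by simp [hi₀def, Fin.le_def]; omega)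
  rcases le_or_gt 0 (l i₀) with hpos | hneg
  · exact Finset.sum_nonneg fun S hS => Finset.prod_nonneg fun j hj => le_trans hpos (hmin j)
  · set μ : ℝ := -(l i₀) with hμdef
    have hμ : 0 < μ := by simp [hμdef]; exact hneg
    set B := (Finset.univ : Finset (Fin n)).erase i₀ with hBdef
    have hcardB : B.card = n - 1 := by
      rw [hBdef, Finset.card_erase_of_mem (Finset.mem_univ i₀), Finset.card_univ, Fintype.card_fin]
    -- Every other eigenvalue is ≥ μ > 0
    have hBpos : ∀ i ∈ B, μ ≤ l i := by
      intro i hiB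
      have hii₀ : i ≠ i₀ := (Finset.mem_erase.mp hiB).1
      have hiB' : i ∈ Finset.univ.erase i₀ := hiB
      have hcard2 : ((Finset.univ.erase i₀).erase i).card = n - 2 := by
        rw [Finset.card_erase_of_mem hiB', Finset.card_erase_of_mem (Finset.mem_univ i₀),
          Finset.card_univ, Fintype.card_fin]
        omega
      have hrest : ∑ j ∈ (Finset.univ.erase i₀).erase i, arctan (l j)
          ≤ ((n : ℝ) - 2) * (π / 2) := by
        calc ∑ j ∈ (Finset.univ.erase i₀).erase i, arctan (l j)
            ≤ ((Finset.univ.erase i₀).erase i).card • (π / 2) :=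
              Finset.sum_le_card_nsmul _ _ _ (fun j _ => (Real.arctan_lt_pi_div_two _).le)
          _ = ((n : ℝ) - 2) * (π / 2) := by
              rw [hcard2, nsmul_eq_mul, Nat.cast_sub hn]
              norm_num
      have hsplit1 : ∑ j ∈ Finset.univ.erase i₀, arctan (l j) + arctan (l i₀)
          = ∑ j, arctan (l j) := Finset.sum_erase_add _ _ (Finset.mem_univ i₀)
      have hsplit2 : ∑ j ∈ (Finset.univ.erase i₀).erase i, arctan (l j) + arctan (l i)
          = ∑ j ∈ Finset.univ.erase i₀, arctan (l j) := Finset.sum_erase_add _ _ hiB'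
      have harc : arctan μ ≤ arctan (l i) := by
        have hμarc : arctan μ = - arctan (l i₀) := by
          rw [hμdef, Real.arctan_neg]
        linarith
      exact arctan_strictMono.le_iff_le.mp harc
    have hBpos' : ∀ i ∈ B, 0 < l i := fun i hi => lt_of_lt_of_le hμ (hBpos i hi)
    -- key analytic bound
    have hstep1 : ∑ i ∈ B, arctan (l i)⁻¹ ≤ arctan μ⁻¹ := by
      have heq : ∀ i ∈ B, arctan (l i)⁻¹ = π / 2 - arctan (l i) :=
        fun i hi => Real.arctan_inv_of_pos (hBpos' i hi)
      rw [Finset.sum_congr rfl heq, Finset.sum_sub_distrib, Finset.sum_const, hcardB,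
        Real.arctan_inv_of_pos hμ]
      have hsum : ∑ i ∈ B, arctan (l i) + arctan (l i₀) = ∑ i, arctan (l i) :=
        Finset.sum_erase_add _ _ (Finset.mem_univ i₀)
      have harc : arctan (l i₀) = - arctan μ := by
        rw [hμdef, Real.arctan_neg, neg_neg]
      have hcast : ((n - 1 : ℕ) : ℝ) = (n : ℝ) - 1 := by
        rw [Nat.cast_sub (by omega)]; norm_num
      rw [nsmul_eq_mul, hcast]
      linarith
    have hS : ∑ i ∈ B, (l i)⁻¹ ≤ μ⁻¹ := by
      have h1 := (arctan_sum_le B (fun i => (l i)⁻¹)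
        (fun i hi => (inv_pos.mpr (hBpos' i hi)).le)).trans hstep1
      exact arctan_strictMono.le_iff_le.mp h1
    -- combinatorial part
    obtain ⟨m, rfl⟩ : ∃ m, k = m + 1 := ⟨k - 1, by omega⟩
    have hm : m < B.card := by omega
    have hcomb := comb_aux l B hBpos' hm
    have hdecomp := esymm_insert_aux l (Finset.notMem_erase i₀ Finset.univ) m
    rw [Finset.insert_erase (Finset.mem_univ i₀)] at hdecomp
    have hEm1 : 0 ≤ ∑ S ∈ B.powersetCard (m+1), ∏ j ∈ S, l j :=
      Finset.sum_nonneg fun S hS => Finset.prod_nonneg fun j hj =>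
        (hBpos' j ((Finset.mem_powersetCard.mp hS).1 hj)).le
    have hEm : 0 ≤ ∑ T ∈ B.powersetCard m, ∏ j ∈ T, l j :=
      Finset.sum_nonneg fun S hS => Finset.prod_nonneg fun j hj =>
        (hBpos' j ((Finset.mem_powersetCard.mp hS).1 hj)).le
    have hkey : μ * ∑ T ∈ B.powersetCard m, ∏ j ∈ T, l j
        ≤ ∑ S ∈ B.powersetCard (m+1), ∏ j ∈ S, l j := by
      calc μ * ∑ T ∈ B.powersetCard m, ∏ j ∈ T, l j
          ≤ μ * ((∑ i ∈ B, (l i)⁻¹) * ∑ S ∈ B.powersetCard (m+1), ∏ j ∈ S, l j) :=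
            mul_le_mul_of_nonneg_left hcomb hμ.le
        _ = (μ * ∑ i ∈ B, (l i)⁻¹) * ∑ S ∈ B.powersetCard (m+1), ∏ j ∈ S, l j := by ring
        _ ≤ 1 * ∑ S ∈ B.powersetCard (m+1), ∏ j ∈ S, l j := by
            refine mul_le_mul_of_nonneg_right ?_ hEm1
            calc μ * ∑ i ∈ B, (l i)⁻¹ ≤ μ * μ⁻¹ := mul_le_mul_of_nonneg_left hS hμ.le
              _ = 1 := mul_inv_cancel₀ hμ.ne'
        _ = ∑ S ∈ B.powersetCard (m+1), ∏ j ∈ S, l j := one_mul _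
    rw [hdecomp]
    have hli₀ : l i₀ = -μ := by rw [hμdef, neg_neg]
    rw [hli₀]
    linarith
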